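/- Let n ≥ 2 be an integer and c > 0. Suppose φ : ℝ → ℝ is twice continuously differentiable, φ(x) > 0 for all x, φ satisfies the solitary-wave equation −c φ + φⁿ + c φⁿ (φⁿ φ')' + c − 1 = 0 on ℝ, and φ(x) → 1, φ'(x) → 0 as x → +∞. Then for every x ∈ ℝ, (1/2) φ(x)^{2n} φ'(x)² = (1/2)(φ(x) − 1)² + (1/c)[(φ(x) − 1) + (1 − φ(x)^{n+1})/(n+1)]. -/

import Mathlib

open Filter Topology

/-- A positive `C²` solitary-wave profile solving
`-c φ + φⁿ + c φⁿ (φⁿ φ')' + c - 1 = 0` with `φ → 1`, `φ' → 0` at `+∞` satisfies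
the first integral `(1/2) φ^{2n} (φ')² = F(φ; c, n)`. -/
theorem stmt_1 (n : ℕ) (hn : 2 ≤ n) (c : ℝ) (hc : 0 < c) (φ : ℝ → ℝ)
    (hreg : ContDiff ℝ 2 φ) (hpos : ∀ x, 0 < φ x)
    (hode : ∀ x, -c * φ x + φ x ^ n
      + c * φ x ^ n * deriv (fun y => φ y ^ n * deriv φ y) x + c - 1 = 0)
    (hlim : Tendsto φ atTop (𝓝 1)) (hlim' : Tendsto (deriv φ) atTop (𝓝 0)) :
    ∀ x, (1 / 2) * φ x ^ (2 * n) * (deriv φ x) ^ 2 =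
      (1 / 2) * (φ x - 1) ^ 2 + (1 / c) * ((φ x - 1) + (1 - φ x ^ (n + 1)) / (n + 1)) := by
  have hφd : Differentiable ℝ φ := hreg.differentiable (by norm_num)
  have h2 : ContDiff ℝ ((1 : ℕ∞) + 1) φ := by exact_mod_cast hreg
  have hφ'c : ContDiff ℝ 1 (deriv φ) := (contDiff_succ_iff_deriv.mp h2).2.2
  have hφ'd : Differentiable ℝ (deriv φ) := hφ'c.differentiable (by norm_num)
  set ψ : ℝ → ℝ := fun y => φ y ^ n * deriv φ y with hψdef
  have hψd : Differentiable ℝ ψ := (hφd.pow n).mul hφ'd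
  set H : ℝ → ℝ := fun y => (1 / 2) * (φ y ^ n * deriv φ y) ^ 2 -
      ((1 / 2) * (φ y - 1) ^ 2 + (1 / c) * ((φ y - 1) + (1 - φ y ^ (n + 1)) / (n + 1)))
    with hHdef
  have hH0 : ∀ x, HasDerivAt H 0 x := by
    intro x
    have hφx : HasDerivAt φ (deriv φ x) x := (hφd x).hasDerivAt
    have hψx : HasDerivAt ψ (deriv ψ x) x := (hψd x).hasDerivAt
    have h1 : HasDerivAt (fun y => (1 / 2) * (φ y ^ n * deriv φ y) ^ 2)
        ((1 / 2) * (2 * ψ x ^ 1 * deriv ψ x)) x := (hψx.pow 2).const_mul _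
    have h2' : HasDerivAt (fun y => (1 / 2) * (φ y - 1) ^ 2)
        ((1 / 2) * (2 * (φ x - 1) ^ 1 * deriv φ x)) x :=
      ((hφx.sub_const 1).pow 2).const_mul _
    have h3 : HasDerivAt (fun y => φ y ^ (n + 1))
        (↑(n + 1) * φ x ^ n * deriv φ x) x := hφx.pow (n + 1)
    have h4 : HasDerivAt (fun y => (1 / c) * ((φ y - 1) + (1 - φ y ^ (n + 1)) / (n + 1)))
        ((1 / c) * (deriv φ x + (0 - ↑(n + 1) * φ x ^ n * deriv φ x) / (n + 1))) x := by
      exact (((hφx.sub_const 1).add (((hasDerivAt_const x (1:ℝ)).sub h3).div_const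
        _)).const_mul _)
    have hD := h1.sub (h2'.add h4)
    have hode' := hode x
    have hψ' : deriv ψ x = deriv (fun y => φ y ^ n * deriv φ y) x := rfl
    have hn1 : ((n : ℝ) + 1) ≠ 0 := by positivity
    convert hD using 1
    case e'_4 => rfl
    case e'_5 => rfl
    case e'_8 => rfl
    have e1 : ((0 : ℝ) - ↑(n + 1) * φ x ^ n * deriv φ x) / ((n : ℝ) + 1)
        = -(φ x ^ n * deriv φ x) := by
      push_cast
      field_simp
      ring
    rw [e1]
    field_simp
    linear_combination (-(1 : ℝ) * deriv φ x) * hode'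
  have hdiff : Differentiable ℝ H := fun x => (hH0 x).differentiableAt
  have hzero : ∀ x, deriv H x = 0 := fun x => (hH0 x).deriv
  have hconst : ∀ x y, H x = H y := is_const_of_deriv_eq_zero hdiff hzero
  have hψlim : Tendsto ψ atTop (𝓝 0) := by
    have := (hlim.pow n).mul hlim'
    simpa using this
  have hHlim : Tendsto H atTop (𝓝 0) := by
    have hmain : Tendsto H atTop (𝓝 ((1 / 2) * (0 : ℝ) ^ 2 -
        ((1 / 2) * ((1 : ℝ) - 1) ^ 2 +
          (1 / c) * (((1 : ℝ) - 1) + ((1 : ℝ) - 1 ^ (n + 1)) / (n + 1))))) := by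
      exact ((hψlim.pow 2).const_mul _).sub
        ((((hlim.sub_const 1).pow 2).const_mul _).add
          ((((hlim.sub_const 1)).add
            (((tendsto_const_nhds.sub (hlim.pow (n + 1))).div_const _))).const_mul _))
    simpa using hmain
  intro x
  have hx : H x = 0 := by
    have : Tendsto H atTop (𝓝 (H x)) := by
      have : H = fun _ => H x := funext fun y => hconst y x
      rw [this]; exact tendsto_const_nhds
    exact tendsto_nhds_unique this hHlim
  rw [hHdef] at hx
  simp only at hx
  linear_combination hx
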